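/- For every horizon T ≥ 1, every state s = (n_1,…,n_N), and every L with n_1 ≤ L and L + 2 ≤ |s|, one has F(s,L) + F(s,L+2) ≥ 2·F(s,L+1); that is, F(s,·) is a discrete convex function of L on the integer interval {n_1, n_1+1, …, |s|}. -/

import Mathlib

open Finset

/-- System parameters: offloading cost, penalty cost, AMA probability,
local-processing probability, and arrival probabilities. -/
structure Params where
  Co : ℝ
  Cp : ℝ
  pa : ℝ
  mu : ℝ
  p : ℕ → ℝ

variable {N : ℕ}

/-- Partial sum `S_j(s) = ∑_{i=1}^j n_i` (components of `s` are 0-indexed). -/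
def S (s : Fin N → ℕ) (j : ℕ) : ℕ :=
  ∑ i ∈ Finset.univ.filter fun i : Fin N => (i : ℕ) < j, s i

/-- Total number of tasks `|s|`. -/
def tot (s : Fin N → ℕ) : ℕ := S s N

/-- The state obtained by offloading the `L` most imminent tasks of `s`:
`(s̄_L)_i = max(S_i(s) − L, 0) − max(S_{i−1}(s) − L, 0)` (truncated ℕ-subtraction). -/
def offload (s : Fin N → ℕ) (L : ℕ) : Fin N → ℕ :=
  fun i => (S s ((i : ℕ) + 1) - L) - (S s (i : ℕ) - L)

/-- Deadline shifting: `shift(s) = (n_2, …, n_N, 0)`. -/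
def shift (s : Fin N → ℕ) : Fin N → ℕ :=
  fun i => if h : (i : ℕ) + 1 < N then s ⟨(i : ℕ) + 1, h⟩ else 0

/-- Arrival vector `a_k`: the `k`-th standard unit vector for `1 ≤ k ≤ N`, zero for `k = 0`. -/
def avec (k : ℕ) : Fin N → ℕ := fun i => if (i : ℕ) + 1 = k then 1 else 0

/-- Local processing: remove one task of smallest deadline (identity on the zero state). -/
def proc (s : Fin N → ℕ) : Fin N → ℕ :=
  fun i => if s i ≠ 0 ∧ ∀ j : Fin N, j < i → s j = 0 then s i - 1 else s i

/-- `s''_{Lk} = shift(s̄_L) + a_k`. -/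
def sdd (s : Fin N → ℕ) (L k : ℕ) : Fin N → ℕ :=
  fun i => shift (offload s L) i + avec k i

/-- `s'_{Lk} = proc(s''_{Lk})`. -/
def sd (s : Fin N → ℕ) (L k : ℕ) : Fin N → ℕ := proc (sdd s L k)

/-- Instantaneous cost with the AMA: `𝒞^A(s,L) = C_o·L + C_p·max(n_1 − L, 0)`. -/
def costA (P : Params) (s : Fin N → ℕ) (L : ℕ) : ℝ :=
  P.Co * L + P.Cp * ((S s 1 - L : ℕ) : ℝ)

/-- Instantaneous cost without the AMA: `𝒞^Ā(s) = C_p·n_1`. -/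
def costNA (P : Params) (s : Fin N → ℕ) : ℝ := P.Cp * (S s 1 : ℕ)

/-- Expected instantaneous cost `𝒞(s,L)`. -/
def cost (P : Params) (s : Fin N → ℕ) (L : ℕ) : ℝ :=
  P.pa * costA P s L + (1 - P.pa) * costNA P s

/-- The dynamic-programming minimization, given the future-cost function `G`. -/
noncomputable def JofG (P : Params) (G : (Fin N → ℕ) → ℕ → ℝ) (s : Fin N → ℕ) : ℝ :=
  (Finset.range (tot s + 1)).inf' (Finset.nonempty_range_iff.mpr (Nat.succ_ne_zero _))
    fun L => cost P s L + P.pa * G s L + (1 - P.pa) * G s 0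

/-- `G^A_T(s,L)`, defined by recursion on the horizon `T`. -/
noncomputable def GA (P : Params) : ℕ → (Fin N → ℕ) → ℕ → ℝ
  | 0, _, _ => 0
  | T + 1, s, L =>
      P.mu * ∑ k ∈ Finset.range (N + 1), P.p k * JofG P (GA P T) (sd s L k)
        + (1 - P.mu) * ∑ k ∈ Finset.range (N + 1), P.p k * JofG P (GA P T) (sdd s L k)

/-- `J_T(s)` for horizon `T ≥ 1`. -/
noncomputable def J (P : Params) (T : ℕ) (s : Fin N → ℕ) : ℝ := JofG P (GA P (T - 1)) s

/-- `J^A_T(s,L) = 𝒞^A(s,L) + G^A_{T−1}(s,L)`. -/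
noncomputable def JA (P : Params) (T : ℕ) (s : Fin N → ℕ) (L : ℕ) : ℝ :=
  costA P s L + GA P (T - 1) s L

/-- `J^A_T(s) = min_{0 ≤ L ≤ |s|} J^A_T(s,L)`. -/
noncomputable def JAmin (P : Params) (T : ℕ) (s : Fin N → ℕ) : ℝ :=
  (Finset.range (tot s + 1)).inf' (Finset.nonempty_range_iff.mpr (Nat.succ_ne_zero _))
    (JA P T s)

/-- `J^Ā_T(s) = 𝒞^Ā(s) + G^A_{T−1}(s,0)`. -/
noncomputable def JNA (P : Params) (T : ℕ) (s : Fin N → ℕ) : ℝ :=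
  costNA P s + GA P (T - 1) s 0

/-- The optimal offloading decision: the smallest minimizer of `L ↦ J^A_T(s,L)`
over `{0,…,|s|}`. -/
noncomputable def Lstar (P : Params) (T : ℕ) (s : Fin N → ℕ) : ℕ :=
  sInf {L | L ≤ tot s ∧ ∀ L' ≤ tot s, JA P T s L ≤ JA P T s L'}

/-- The smallest deadline `d(s)` carried by a task of `s` (1-indexed). -/
noncomputable def dmin (s : Fin N → ℕ) : ℕ := sInf {j | 0 < S s j}

/-- `sa` is adjacent to `s`. -/
def Adjacent (s sa : Fin N → ℕ) : Prop :=
  (s ≠ 0 ∧ ∃ j, 1 ≤ j ∧ j ≤ dmin s ∧ sa = s + avec j) ∨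
    (s = 0 ∧ ∃ j, 1 ≤ j ∧ j ≤ N ∧ sa = avec j)

/-- `L_g`: the number of excessive tasks, `max_{1 ≤ j ≤ M} max(S_j(s) − (j−1), 0)`. -/
def Lg (s : Fin N → ℕ) (M : ℕ) : ℕ := (Finset.Icc 1 M).sup fun j => S s j - (j - 1)

/-- `Γ_j = ∑_{i=1}^j γ_i` for the parameters `γ` of Definition 2
(`γ_1 = 0`, `γ_j = min(n_j, j−1−∑_{i<j} γ_i)` for `2 ≤ j ≤ M`, `γ_j = 0` for `j > M`). -/
def Gam (s : Fin N → ℕ) (M : ℕ) : ℕ → ℕ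
  | 0 => 0
  | j + 1 =>
      if 2 ≤ j + 1 ∧ j + 1 ≤ M then
        Gam s M j + min (S s (j + 1) - S s j) (j - Gam s M j)
      else Gam s M j

/-- The lean state of `s`: `n^ℓ_i = max(γ_i, n^r_i)` where `s^r = s̄_{L_g}`. -/
def leanState (s : Fin N → ℕ) (M : ℕ) : Fin N → ℕ :=
  fun i => max (Gam s M ((i : ℕ) + 1) - Gam s M (i : ℕ)) (offload s (Lg s M) i)

/-- `F(s,L) = J^Ā_T(s̄_L) + L·C_o`. -/
noncomputable def F (P : Params) (T : ℕ) (s : Fin N → ℕ) (L : ℕ) : ℝ :=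
  JNA P T (offload s L) + L * P.Co

-- ===================== my auxiliary development =====================
namespace Aux

/-! ### partial sum lemmas -/

lemma S_zero (s : Fin N → ℕ) : S s 0 = 0 := by
  unfold S
  apply Finset.sum_eq_zero
  intro i hi
  simp at hi

lemma S_succ (s : Fin N → ℕ) (j : ℕ) :
    S s (j+1) = S s j + (if h : j < N then s ⟨j, h⟩ else 0) := by
  by_cases h : j < N
  · rw [dif_pos h]
    have e : (Finset.univ.filter fun i : Fin N => (i:ℕ) < j+1)
        = insert (⟨j,h⟩ : Fin N) (Finset.univ.filter fun i : Fin N => (i:ℕ) < j) := by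
      ext i
      simp [Fin.ext_iff]
      omega
    rw [S, S, e, Finset.sum_insert (by simp)]
    exact add_comm _ _
  · rw [dif_neg h]
    have e : (Finset.univ.filter fun i : Fin N => (i:ℕ) < j+1)
        = (Finset.univ.filter fun i : Fin N => (i:ℕ) < j) := by
      ext i
      simp
      have := i.isLt
      omega
    rw [S, S, e, add_zero]

lemma S_le (s : Fin N → ℕ) {j k : ℕ} (h : j ≤ k) : S s j ≤ S s k := by
  apply Finset.sum_le_sum_of_subset
  intro i
  simp
  omega

lemma S_of_ge (s : Fin N → ℕ) {j : ℕ} (h : N ≤ j) : S s j = S s N := by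
  unfold S
  congr 1
  ext i
  simp
  have := i.isLt
  omega

lemma S_le_tot (s : Fin N → ℕ) (j : ℕ) : S s j ≤ tot s := by
  rcases le_or_gt j N with h | h
  · exact S_le s h
  · rw [S_of_ge s h.le]; exact le_rfl

lemma single_le_S (s : Fin N → ℕ) {j : Fin N} {m : ℕ} (h : (j:ℕ) < m) : s j ≤ S s m := by
  apply Finset.single_le_sum (f := fun i : Fin N => s i)
  · intro i _; exact Nat.zero_le _
  · simp [h]

lemma state_ext {s t : Fin N → ℕ} (h : ∀ j, S s j = S t j) : s = t := by
  funext i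
  have h1 := h ((i:ℕ)+1)
  have h2 := h (i:ℕ)
  have e1 := S_succ s (i:ℕ)
  have e2 := S_succ t (i:ℕ)
  rw [dif_pos i.isLt] at e1 e2
  simp only [Fin.eta] at e1 e2
  omega

lemma S_offload (s : Fin N → ℕ) (L : ℕ) (j : ℕ) : S (offload s L) j = S s j - L := by
  induction j with
  | zero => rw [S_zero, S_zero]; omega
  | succ j ih =>
    rw [S_succ, S_succ, ih]
    by_cases h : j < N
    · rw [dif_pos h, dif_pos h]
      have h1 : S s j ≤ S s (j+1) := S_le s (by omega)
      have e : offload s L ⟨j, h⟩ = (S s (j+1) - L) - (S s j - L) := rfl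
      have e3 := S_succ s j
      rw [dif_pos h] at e3
      rw [e]
      omega
    · rw [dif_neg h, dif_neg h]
      omega

lemma offload_zero (s : Fin N → ℕ) : offload s 0 = s := by
  apply state_ext
  intro j
  rw [S_offload]
  omega

lemma tot_offload (s : Fin N → ℕ) (L : ℕ) : tot (offload s L) = tot s - L := S_offload s L N

lemma S_shift (s : Fin N → ℕ) (j : ℕ) : S (shift s) j = S s (min (j+1) N) - S s 1 := by
  induction j with
  | zero =>
    rw [S_zero]
    rcases Nat.eq_zero_or_pos N with h0 | h0
    · have e1 : S s (min (0+1) N) = S s N := S_of_ge s (by omega)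
      have e2 : S s 1 = S s N := S_of_ge s (by omega)
      omega
    · have e : min (0+1) N = 1 := by omega
      rw [e]
      omega
  | succ j ih =>
    rw [S_succ, ih]
    by_cases h : j < N
    · rw [dif_pos h]
      have e : shift s ⟨j, h⟩ = if h2 : j + 1 < N then s ⟨j+1, h2⟩ else 0 := rfl
      rw [e]
      by_cases h2 : j + 1 < N
      · rw [dif_pos h2]
        have e1 : min (j+1) N = j+1 := by omega
        have e2 : min (j+1+1) N = j+1+1 := by omega
        rw [e1, e2]
        have e3 := S_succ s (j+1)
        rw [dif_pos h2] at e3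
        have h4 : S s 1 ≤ S s (j+1) := S_le s (by omega)
        omega
      · rw [dif_neg h2]
        have e1 : min (j+1) N = N := by omega
        have e2 : min (j+1+1) N = N := by omega
        rw [e1, e2, add_zero]
    · rw [dif_neg h]
      have e1 : min (j+1) N = N := by omega
      have e2 : min (j+1+1) N = N := by omega
      rw [e1, e2, add_zero]

lemma tot_shift (s : Fin N → ℕ) : tot (shift s) = tot s - S s 1 := by
  rw [tot, S_shift]
  congr 2
  omega

lemma shift_offload (x : Fin N → ℕ) (L : ℕ) :
    shift (offload x L) = offload (shift x) (L - S x 1) := by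
  apply state_ext
  intro j
  rw [S_shift, S_offload, S_offload, S_offload, S_shift]
  have h1 : S x 1 ≤ S x (min (j+1) N) ∨ min (j+1) N = 0 := by
    rcases Nat.eq_zero_or_pos (min (j+1) N) with h | h
    · right; exact h
    · left; exact S_le x (by omega)
  rcases h1 with h1 | h1
  · omega
  · rw [h1, S_zero]
    have hN0 : N = 0 := by omega
    have e2 : S x 1 = S x N := S_of_ge x (by omega)
    have e3 : S x N = 0 := by rw [← S_zero x, ← hN0]
    omega

lemma proc_eq_offload (z : Fin N → ℕ) : proc z = offload z 1 := by
  funext i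
  have hS : S z ((i:ℕ)+1) = S z (i:ℕ) + z i := by
    have := S_succ z (i:ℕ)
    rw [dif_pos i.isLt] at this
    simp only [Fin.eta] at this
    omega
  have hzero : (∀ j : Fin N, j < i → z j = 0) ↔ S z (i:ℕ) = 0 := by
    constructor
    · intro hz
      apply Finset.sum_eq_zero
      intro j hj
      simp at hj
      exact hz j (by exact Fin.lt_def.mpr hj)
    · intro hz j hj
      have := single_le_S z (j := j) (m := (i:ℕ)) (Fin.lt_def.mp hj)
      omega
  show (if z i ≠ 0 ∧ ∀ j : Fin N, j < i → z j = 0 then z i - 1 else z i)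
      = (S z ((i:ℕ)+1) - 1) - (S z (i:ℕ) - 1)
  by_cases hc : z i ≠ 0 ∧ ∀ j : Fin N, j < i → z j = 0
  · rw [if_pos hc]
    have h0 : S z (i:ℕ) = 0 := hzero.mp hc.2
    omega
  · rw [if_neg hc]
    push_neg at hc
    by_cases hzi : z i = 0
    · omega
    · obtain ⟨j, hj, hzj⟩ := hc hzi
      have h2 := single_le_S z (j := j) (m := (i:ℕ)) (Fin.lt_def.mp hj)
      omega

/-! ### integer-vector representation of states -/

def Mon (A : Fin N → ℤ) : Prop := ∀ i j : Fin N, i ≤ j → A i ≤ A j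

def zps (s : Fin N → ℕ) : Fin N → ℤ := fun i => (S s ((i:ℕ)+1) : ℤ)

def zst (A : Fin N → ℤ) : Fin N → ℕ := fun i =>
  if _ : (i:ℕ) = 0 then (A i).toNat
  else (A i).toNat - (A ⟨(i:ℕ)-1, by have := i.isLt; omega⟩).toNat

lemma zst_apply0 (A : Fin N → ℤ) (i : Fin N) (h : (i:ℕ) = 0) : zst A i = (A i).toNat := by
  simp only [zst, dif_pos h]

lemma zst_applyS (A : Fin N → ℤ) (i ip : Fin N) (h : (ip:ℕ)+1 = (i:ℕ)) :
    zst A i = (A i).toNat - (A ip).toNat := by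
  have h0 : ¬ ((i:ℕ) = 0) := by omega
  have hipN : (i:ℕ)-1 < N := by have := i.isLt; omega
  have e : (⟨(i:ℕ)-1, hipN⟩ : Fin N) = ip := Fin.ext (show (i:ℕ)-1 = (ip:ℕ) by omega)
  simp only [zst, dif_neg h0]
  exact congrArg (fun t => (A i).toNat - (A t).toNat) e

lemma Mon_zps (s : Fin N → ℕ) : Mon (zps s) := by
  intro i j hij
  have : S s ((i:ℕ)+1) ≤ S s ((j:ℕ)+1) := S_le s (by have := Fin.le_def.mp hij; omega)
  simp only [zps]
  exact_mod_cast this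

lemma zps_nonneg (s : Fin N → ℕ) (i : Fin N) : 0 ≤ zps s i := by
  simp [zps]

lemma zps_apply (s : Fin N → ℕ) (i : Fin N) : zps s i = (S s ((i:ℕ)+1) : ℤ) := rfl

lemma zst_zps (s : Fin N → ℕ) : zst (zps s) = s := by
  funext i
  have hNi := i.isLt
  have e2 := S_succ s (i:ℕ)
  rw [dif_pos hNi] at e2
  simp only [Fin.eta] at e2
  by_cases h0 : (i:ℕ) = 0
  · rw [zst_apply0 _ _ h0]
    have e0 : S s (i:ℕ) = 0 := by rw [h0, S_zero]
    simp only [zps_apply]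
    omega
  · have hipN : (i:ℕ)-1 < N := by omega
    rw [zst_applyS (zps s) i ⟨(i:ℕ)-1, hipN⟩ (show (i:ℕ)-1+1 = (i:ℕ) by omega)]
    simp only [zps_apply]
    have e1 : ((⟨(i:ℕ)-1, hipN⟩ : Fin N) : ℕ) + 1 = (i:ℕ) := show (i:ℕ)-1+1 = (i:ℕ) by omega
    rw [e1]
    omega

lemma S_zst_val (A : Fin N → ℤ) (hA : Mon A) :
    ∀ (n : ℕ) (h : n < N), S (zst A) (n+1) = (A ⟨n, h⟩).toNat := by
  intro n
  induction n with
  | zero =>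
    intro h
    rw [S_succ, dif_pos h, S_zero, zst_apply0 A ⟨0,h⟩ rfl]
    omega
  | succ n ih =>
    intro h
    rw [S_succ, dif_pos h, ih (by omega)]
    rw [zst_applyS A ⟨n+1, h⟩ ⟨n, by omega⟩ rfl]
    have hle : A ⟨n, by omega⟩ ≤ A ⟨n+1, h⟩ := hA _ _ (show n ≤ n+1 by omega)
    omega

lemma S_zst_fin (A : Fin N → ℤ) (hA : Mon A) (i : Fin N) :
    S (zst A) ((i:ℕ)+1) = (A i).toNat := by
  have := S_zst_val A hA (i:ℕ) i.isLt
  simpa [Fin.eta] using this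

lemma zst_sub (A : Fin N → ℤ) (hA : Mon A) (M : ℕ) :
    zst (fun i => A i - (M:ℤ)) = offload (zst A) M := by
  funext i
  have hNi := i.isLt
  have hRHS : offload (zst A) M i = (S (zst A) ((i:ℕ)+1) - M) - (S (zst A) (i:ℕ) - M) := rfl
  have hS1 : S (zst A) ((i:ℕ)+1) = (A i).toNat := S_zst_fin A hA i
  by_cases h0 : (i:ℕ) = 0
  · have hS0 : S (zst A) (i:ℕ) = 0 := by rw [h0, S_zero]
    rw [hRHS, hS0, hS1, zst_apply0 _ _ h0]
    omega
  · have hipN : (i:ℕ)-1 < N := by omega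
    have hS0 : S (zst A) (i:ℕ) = (A ⟨(i:ℕ)-1, hipN⟩).toNat := by
      have := S_zst_val A hA ((i:ℕ)-1) hipN
      have e : (i:ℕ)-1+1 = (i:ℕ) := by omega
      rwa [e] at this
    rw [hRHS, hS0, hS1, zst_applyS _ i ⟨(i:ℕ)-1, hipN⟩ (show (i:ℕ)-1+1 = (i:ℕ) by omega)]
    omega

lemma szv_eval (B : Fin N → ℤ) (hB : Mon B) (j jm j0 : Fin N)
    (hjm : (jm:ℕ) = min ((j:ℕ)+1) (N-1)) (hj0 : (j0:ℕ) = 0) :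
    zps (shift (zst B)) j = ((B jm).toNat : ℤ) - ((B j0).toNat : ℤ) := by
  have hNj := j.isLt
  rw [zps_apply, S_shift]
  have h1 : S (zst B) 1 = (B j0).toNat := by
    have := S_zst_fin B hB j0
    rw [hj0] at this
    simpa using this
  have h2 : S (zst B) (min ((j:ℕ)+1+1) N) = (B jm).toNat := by
    have := S_zst_fin B hB jm
    have e : (jm:ℕ)+1 = min ((j:ℕ)+1+1) N := by omega
    rwa [e] at this
  rw [h1, h2]
  have hle : B j0 ≤ B jm := hB _ _ (by rw [Fin.le_def]; omega)
  omega

def zdelta (k : ℕ) : Fin N → ℤ := fun i => if 1 ≤ k ∧ k ≤ (i:ℕ)+1 then 1 else 0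

lemma zst_add_delta (A : Fin N → ℤ) (hA : Mon A) (hA0 : ∀ i, 0 ≤ A i) (k : ℕ) :
    zst (fun i => A i + zdelta k i) = fun i => zst A i + avec k i := by
  funext i
  have hNi := i.isLt
  have h01 := hA0 i
  by_cases h0 : (i:ℕ) = 0
  · rw [zst_apply0 _ _ h0, zst_apply0 _ _ h0]
    simp only [zdelta, avec, h0]
    split_ifs <;> omega
  · have hipN : (i:ℕ)-1 < N := by omega
    have hip1 : ((⟨(i:ℕ)-1, hipN⟩ : Fin N) : ℕ) + 1 = (i:ℕ) := show (i:ℕ)-1+1 = (i:ℕ) by omega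
    rw [zst_applyS _ i ⟨(i:ℕ)-1, hipN⟩ hip1, zst_applyS _ i ⟨(i:ℕ)-1, hipN⟩ hip1]
    have hle : A ⟨(i:ℕ)-1, hipN⟩ ≤ A i := hA _ _ (show (i:ℕ)-1 ≤ (i:ℕ) by omega)
    have h02 := hA0 ⟨(i:ℕ)-1, hipN⟩
    simp only [zdelta, avec, hip1]
    split_ifs <;> omega

lemma offload_of_ge (s : Fin N → ℕ) {M : ℕ} (h : tot s ≤ M) :
    offload s M = offload s (tot s) := by
  apply state_ext
  intro j
  rw [S_offload, S_offload]
  have := S_le_tot s j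
  omega

/-! ### scalar midpoint functions -/

def mdd (x : ℤ) : ℤ := x / 2
def muu (x : ℤ) : ℤ := x - x / 2

def muv (A B : Fin N → ℤ) : Fin N → ℤ := fun i => muu (A i + B i)
def mdv (A B : Fin N → ℤ) : Fin N → ℤ := fun i => mdd (A i + B i)

lemma Mon_muv {A B : Fin N → ℤ} (hA : Mon A) (hB : Mon B) : Mon (muv A B) := by
  intro i j hij
  have h1 := hA i j hij
  have h2 := hB i j hij
  simp only [muv, muu]
  omega

lemma Mon_mdv {A B : Fin N → ℤ} (hA : Mon A) (hB : Mon B) : Mon (mdv A B) := by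
  intro i j hij
  have h1 := hA i j hij
  have h2 := hB i j hij
  simp only [mdv, mdd]
  omega


variable (P : Params)

/-- `Phi P T A` : the `Ebar`-value function on integer partial-sum vectors. -/
noncomputable def Phi : ℕ → (Fin N → ℤ) → ℝ
  | 0, _ => 0
  | (T+1), A => ∑ k ∈ Finset.range (N+1), P.p k *
      (P.mu * JofG P (GA P T) (proc (zst A + avec k)) +
        (1 - P.mu) * JofG P (GA P T) (zst A + avec k))

lemma Phi_congr {T : ℕ} {A B : Fin N → ℤ} (h : zst A = zst B) : Phi P T A = Phi P T B := by
  cases T with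
  | zero => rfl
  | succ T => simp only [Phi, h]

lemma GA_eq_Phi (T : ℕ) (v : Fin N → ℕ) (L : ℕ) :
    GA P T v L = Phi P T (zps (shift (offload v L))) := by
  cases T with
  | zero => rfl
  | succ T =>
    show _ = Phi P (T+1) _
    rw [Phi, zst_zps]
    show GA P (T+1) v L = _
    rw [GA]
    rw [Finset.mul_sum, Finset.mul_sum, ← Finset.sum_add_distrib]
    apply Finset.sum_congr rfl
    intro k _
    have e : sdd v L k = shift (offload v L) + avec k := rfl
    have e2 : sd v L k = proc (shift (offload v L) + avec k) := by rw [sd, e]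
    rw [e, e2]
    ring

/-! ### the offload-minimization operator `KK` -/

lemma Mon_sub {A : Fin N → ℤ} (hA : Mon A) (M : ℕ) : Mon (fun i => A i - (M:ℤ)) := by
  intro i j hij
  have := hA i j hij
  show A i - (M:ℤ) ≤ A j - (M:ℤ)
  omega

lemma Mon_addc {A : Fin N → ℤ} (hA : Mon A) (t : ℕ) : Mon (fun i => A i + (t:ℤ)) := by
  intro i j hij
  have := hA i j hij
  show A i + (t:ℤ) ≤ A j + (t:ℤ)
  omega

/-- Properties propagated through the dynamic-programming recursion. -/
structure GoodF (f : (Fin N → ℤ) → ℝ) : Prop where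
  congr : ∀ {A B : Fin N → ℤ}, zst A = zst B → f A = f B
  mono : ∀ {A B : Fin N → ℤ}, Mon A → Mon B → (∀ i, A i ≤ B i) → f A ≤ f B
  lip : ∀ (A : Fin N → ℤ) (t : ℕ), Mon A → f (fun i => A i + (t:ℤ)) ≤ f A + P.Cp * t
  mid : ∀ (A B : Fin N → ℤ), Mon A → Mon B → f (muv A B) + f (mdv A B) ≤ f A + f B

noncomputable def KK (f : (Fin N → ℤ) → ℝ) (B : Fin N → ℤ) : ℝ :=
  (Finset.range (tot (zst B) + 1)).inf' (Finset.nonempty_range_iff.mpr (Nat.succ_ne_zero _))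
    (fun M => P.Co * M + f (fun i => B i - (M:ℤ)))

lemma KK_le (hCo : 0 ≤ P.Co) {f : (Fin N → ℤ) → ℝ} (hf : GoodF P f)
    {B : Fin N → ℤ} (hB : Mon B) (M : ℕ) :
    KK P f B ≤ P.Co * M + f (fun i => B i - (M:ℤ)) := by
  by_cases hM : M ≤ tot (zst B)
  · exact Finset.inf'_le _ (by simp only [Finset.mem_range]; omega)
  · have h1 : KK P f B ≤ P.Co * (tot (zst B)) + f (fun i => B i - ((tot (zst B) : ℕ):ℤ)) :=
      Finset.inf'_le _ (by simp only [Finset.mem_range]; omega)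
    refine h1.trans ?_
    have e : f (fun i => B i - ((tot (zst B):ℕ):ℤ)) = f (fun i => B i - (M:ℤ)) := by
      apply hf.congr
      rw [zst_sub B hB, zst_sub B hB]
      rw [offload_of_ge (zst B) (le_refl (tot (zst B))),
        offload_of_ge (zst B) (le_of_lt (show tot (zst B) < M by omega))]
    rw [e]
    have : (tot (zst B) : ℝ) ≤ (M:ℝ) := by exact_mod_cast le_of_lt (by omega)
    nlinarith [this, hCo]

lemma KK_exists {f : (Fin N → ℤ) → ℝ} (B : Fin N → ℤ) :
    ∃ M ≤ tot (zst B), KK P f B = P.Co * M + f (fun i => B i - (M:ℤ)) := by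
  obtain ⟨M, hM, hEq⟩ := Finset.exists_mem_eq_inf'
    (Finset.nonempty_range_iff.mpr (Nat.succ_ne_zero (tot (zst B))))
    (fun M => P.Co * M + f (fun i => B i - (M:ℤ)))
  exact ⟨M, by simpa [Finset.mem_range, Nat.lt_succ_iff] using hM, hEq⟩

lemma KK_mono (hCo : 0 ≤ P.Co) {f : (Fin N → ℤ) → ℝ} (hf : GoodF P f)
    {A B : Fin N → ℤ} (hA : Mon A) (hB : Mon B) (hAB : ∀ i, A i ≤ B i) :
    KK P f A ≤ KK P f B := by
  obtain ⟨M, _, hEq⟩ := KK_exists P (f := f) B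
  rw [hEq]
  refine (KK_le P hCo hf hA M).trans ?_
  have := hf.mono (Mon_sub hA M) (Mon_sub hB M)
    (fun i => by show A i - (M:ℤ) ≤ B i - M; have := hAB i; omega)
  linarith

lemma KK_lip (hCo : 0 ≤ P.Co) {f : (Fin N → ℤ) → ℝ} (hf : GoodF P f)
    {B : Fin N → ℤ} (hB : Mon B) (t : ℕ) :
    KK P f (fun i => B i + (t:ℤ)) ≤ KK P f B + P.Co * t := by
  obtain ⟨M, _, hEq⟩ := KK_exists P (f := f) B
  have h1 : KK P f (fun i => B i + (t:ℤ)) ≤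
      P.Co * ((M+t : ℕ):ℝ) + f (fun i => (B i + (t:ℤ)) - ((M+t:ℕ):ℤ)) :=
    KK_le P hCo hf (Mon_addc hB t) (M+t)
  have e : (fun i => (B i + (t:ℤ)) - ((M+t:ℕ):ℤ)) = (fun i => B i - (M:ℤ)) := by
    funext i
    push_cast
    ring
  rw [e] at h1
  rw [hEq]
  push_cast at h1 ⊢
  linarith

lemma KK_mid (hCo : 0 ≤ P.Co) {f : (Fin N → ℤ) → ℝ} (hf : GoodF P f)
    (A B : Fin N → ℤ) (hA : Mon A) (hB : Mon B) :
    KK P f (muv A B) + KK P f (mdv A B) ≤ KK P f A + KK P f B := by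
  obtain ⟨m, _, em⟩ := KK_exists P (f := f) A
  obtain ⟨n, _, en⟩ := KK_exists P (f := f) B
  set u : ℕ := (m+n+1)/2 with hu
  set v : ℕ := (m+n)/2 with hv
  have huv : u + v = m + n := by omega
  have h1 : KK P f (muv A B) ≤ P.Co * u + f (fun i => muv A B i - (u:ℤ)) :=
    KK_le P hCo hf (Mon_muv hA hB) u
  have h2 : KK P f (mdv A B) ≤ P.Co * v + f (fun i => mdv A B i - (v:ℤ)) :=
    KK_le P hCo hf (Mon_mdv hA hB) v
  have hmid := hf.mid (fun i => A i - (m:ℤ)) (fun i => B i - (n:ℤ)) (Mon_sub hA m) (Mon_sub hB n)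
  have hsum : f (fun i => muv A B i - (u:ℤ)) + f (fun i => mdv A B i - (v:ℤ)) =
      f (muv (fun i => A i - (m:ℤ)) (fun i => B i - (n:ℤ)))
        + f (mdv (fun i => A i - (m:ℤ)) (fun i => B i - (n:ℤ))) := by
    rcases Nat.even_or_odd (m+n) with hpar | hpar
    · have hpar2 : (m+n) % 2 = 0 := Nat.even_iff.mp hpar
      have e1 : (fun i => muv A B i - (u:ℤ)) =
          muv (fun i => A i - (m:ℤ)) (fun i => B i - (n:ℤ)) := by
        funext i
        show muu (A i + B i) - (u:ℤ) = muu ((A i - (m:ℤ)) + (B i - (n:ℤ)))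
        simp only [muu]
        omega
      have e2 : (fun i => mdv A B i - (v:ℤ)) =
          mdv (fun i => A i - (m:ℤ)) (fun i => B i - (n:ℤ)) := by
        funext i
        show mdd (A i + B i) - (v:ℤ) = mdd ((A i - (m:ℤ)) + (B i - (n:ℤ)))
        simp only [mdd]
        omega
      rw [e1, e2]
    · have hpar2 : (m+n) % 2 = 1 := Nat.odd_iff.mp hpar
      have e1 : (fun i => muv A B i - (u:ℤ)) =
          mdv (fun i => A i - (m:ℤ)) (fun i => B i - (n:ℤ)) := by
        funext i
        show muu (A i + B i) - (u:ℤ) = mdd ((A i - (m:ℤ)) + (B i - (n:ℤ)))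
        simp only [muu, mdd]
        omega
      have e2 : (fun i => mdv A B i - (v:ℤ)) =
          muv (fun i => A i - (m:ℤ)) (fun i => B i - (n:ℤ)) := by
        funext i
        show mdd (A i + B i) - (v:ℤ) = muu ((A i - (m:ℤ)) + (B i - (n:ℤ)))
        simp only [muu, mdd]
        omega
      rw [e1, e2]
      ring
  have hcast : (u:ℝ) + (v:ℝ) = (m:ℝ) + (n:ℝ) := by exact_mod_cast congrArg (Nat.cast : ℕ → ℝ) huv
  rw [em, en]
  nlinarith [h1, h2, hmid, hsum, hcast]

/-! ### splitting the J-minimization -/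

/-- the effective per-unit cost `c = (1-p_a)C_p + p_a C_o`. -/
noncomputable def cc : ℝ := (1 - P.pa) * P.Cp + P.pa * P.Co

lemma GA_eq_Phi' (T' : ℕ) (x : Fin N → ℕ) (L : ℕ) :
    GA P T' x L = Phi P T' (fun i => zps (shift x) i - ((L - S x 1 : ℕ) : ℤ)) := by
  rw [GA_eq_Phi]
  apply Phi_congr
  rw [zst_zps, zst_sub (zps (shift x)) (Mon_zps _), zst_zps, shift_offload]

lemma tot_zst_W (x : Fin N → ℕ) : tot (zst (zps (shift x))) = tot x - S x 1 := by
  rw [zst_zps, tot_shift]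

lemma Jsplit (hCo : 0 < P.Co) (hCoCp : P.Co ≤ P.Cp) (hpa0 : 0 ≤ P.pa) (hpa1 : P.pa ≤ 1)
    (T' : ℕ) (x : Fin N → ℕ) :
    JofG P (GA P T') x = cc P * (S x 1 : ℝ) + (1 - P.pa) * Phi P T' (zps (shift x))
      + P.pa * KK P (Phi P T') (zps (shift x)) := by
  set n1 := S x 1 with hn1
  set W := zps (shift x) with hW
  have hn1tot : n1 ≤ tot x := S_le_tot x 1
  have e4 : (fun i => W i - ((0:ℕ):ℤ)) = W := by funext i; simp
  have hGA0 : GA P T' x 0 = Phi P T' W := by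
    rw [GA_eq_Phi' P T' x 0]
    rw [show (0 - n1 : ℕ) = 0 from by omega, e4]
  unfold JofG
  apply le_antisymm
  · obtain ⟨M, hM, hEq⟩ := KK_exists P (f := Phi P T') W
    rw [tot_zst_W] at hM
    have hLmem : n1 + M ∈ Finset.range (tot x + 1) := by
      simp only [Finset.mem_range]
      omega
    refine le_trans (Finset.inf'_le _ hLmem) ?_
    rw [GA_eq_Phi' P T' x (n1+M), hGA0]
    rw [show (n1 + M - n1 : ℕ) = M from by omega]
    unfold cost costA costNA
    rw [show (S x 1 - (n1+M) : ℕ) = 0 from by omega]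
    rw [← hn1, hEq, cc]
    push_cast
    ring_nf
    simp only [hW, neg_add_eq_sub]
    linarith
  · apply Finset.le_inf'
    intro L hL
    simp only [Finset.mem_range] at hL
    rw [GA_eq_Phi' P T' x L, hGA0]
    unfold cost costA costNA
    rw [← hn1]
    rcases le_or_gt L n1 with hc | hc
    · have hK : KK P (Phi P T') W ≤ P.Co * ((0:ℕ):ℝ) + Phi P T' (fun i => W i - ((0:ℕ):ℤ)) :=
        Finset.inf'_le _ (by simp)
      rw [e4] at hK
      simp only [Nat.cast_zero, mul_zero, zero_add] at hK
      rw [show (L - n1 : ℕ) = 0 from by omega, e4]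
      have hc1 : ((n1 - L : ℕ) : ℝ) = (n1:ℝ) - (L:ℝ) := by
        push_cast [Nat.cast_sub hc]
        ring
      rw [hc1]
      have hpaK := mul_le_mul_of_nonneg_left hK hpa0
      have hLn1 : (L:ℝ) ≤ (n1:ℝ) := by exact_mod_cast hc
      have hCoCp' : 0 ≤ (P.Cp - P.Co) * ((n1:ℝ) - L) := by
        apply mul_nonneg (by linarith) (by linarith)
      rw [cc]
      nlinarith [hpaK, hCoCp', hpa0]
    · have hMle : L - n1 ≤ tot (zst W) := by
        rw [tot_zst_W]
        omega
      have hK : KK P (Phi P T') W ≤ P.Co * ((L - n1 : ℕ):ℝ)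
          + Phi P T' (fun i => W i - ((L - n1 : ℕ):ℤ)) :=
        Finset.inf'_le _ (by simp only [Finset.mem_range]; omega)
      rw [show (n1 - L : ℕ) = 0 from by omega]
      have hc1 : ((L - n1 : ℕ) : ℝ) = (L:ℝ) - (n1:ℝ) := by
        push_cast [Nat.cast_sub hc.le]
        ring
      rw [hc1] at hK
      have hpaK := mul_le_mul_of_nonneg_left hK hpa0
      rw [cc]
      push_cast
      nlinarith [hpaK]


/-! ### the J-layer -/

/-- combined continuation value `h = (1-p_a)·Φ + p_a·K`. -/
noncomputable def hh (T' : ℕ) (y : Fin N → ℤ) : ℝ :=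
  (1 - P.pa) * Phi P T' y + P.pa * KK P (Phi P T') y

section Jlayer

variable {P} (hCo : 0 < P.Co) (hCoCp : P.Co ≤ P.Cp) (hpa0 : 0 ≤ P.pa) (hpa1 : P.pa ≤ 1)
variable {T' : ℕ} (hG : GoodF P (Phi (N := N) P T'))

include hCo hCoCp hpa0 hpa1 hG

lemma cc_nonneg : 0 ≤ cc P := by
  unfold cc
  nlinarith

lemma cc_le_Cp : cc P ≤ P.Cp := by
  unfold cc
  nlinarith

lemma hh_mono {A B : Fin N → ℤ} (hA : Mon A) (hB : Mon B) (hAB : ∀ i, A i ≤ B i) :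
    hh P T' A ≤ hh P T' B := by
  unfold hh
  have h1 := hG.mono hA hB hAB
  have h2 := KK_mono P hCo.le hG hA hB hAB
  nlinarith

lemma hh_lip (A : Fin N → ℤ) (t : ℕ) (hA : Mon A) :
    hh P T' (fun i => A i + (t:ℤ)) ≤ hh P T' A + cc P * t := by
  unfold hh cc
  have h1 := hG.lip A t hA
  have h2 := KK_lip P hCo.le hG hA t
  nlinarith

lemma hh_mid (A B : Fin N → ℤ) (hA : Mon A) (hB : Mon B) :
    hh P T' (muv A B) + hh P T' (mdv A B) ≤ hh P T' A + hh P T' B := by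
  unfold hh
  have h1 := hG.mid A B hA hB
  have h2 := KK_mid P hCo.le hG A B hA hB
  nlinarith

omit hG

/-- index of the shifted component. -/
@[simp] def jmF (hN : 0 < N) (j : Fin N) : Fin N :=
  ⟨min ((j:ℕ)+1) (N-1), by have := j.isLt; omega⟩

include hG

lemma JJrep (hN : 0 < N) {B : Fin N → ℤ} (hB : Mon B) :
    JofG P (GA P T') (zst B)
      = cc P * (((B ⟨0,hN⟩).toNat : ℕ) : ℝ) + hh P T' (zps (shift (zst B))) := by
  rw [Jsplit P hCo hCoCp hpa0 hpa1 T' (zst B)]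
  have e : S (zst B) 1 = (B ⟨0, hN⟩).toNat := by
    have := S_zst_fin B hB ⟨0, hN⟩
    simpa using this
  rw [e]
  unfold hh
  ring

lemma JJ_mono (hN : 0 < N) {A B : Fin N → ℤ} (hA : Mon A) (hB : Mon B)
    (hAB : ∀ i, A i ≤ B i) :
    JofG P (GA P T') (zst A) ≤ JofG P (GA P T') (zst B) := by
  rw [JJrep hCo hCoCp hpa0 hpa1 hG hN hA, JJrep hCo hCoCp hpa0 hpa1 hG hN hB]
  set szA := zps (shift (zst A)) with hszA
  set szB := zps (shift (zst B)) with hszB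
  set a0 := (A ⟨0,hN⟩).toNat with ha0
  set b0 := (B ⟨0,hN⟩).toNat with hb0
  have ha0b0 : a0 ≤ b0 := by
    have := hAB ⟨0,hN⟩
    omega
  set d : ℕ := b0 - a0 with hd
  have h1 : ∀ j, szA j ≤ szB j + (d:ℤ) := by
    intro j
    rw [hszA, hszB, szv_eval A hA j (jmF hN j) ⟨0,hN⟩ rfl rfl,
      szv_eval B hB j (jmF hN j) ⟨0,hN⟩ rfl rfl]
    have := hAB (jmF hN j)
    have := hAB ⟨0,hN⟩
    omega
  have h2 : hh P T' szA ≤ hh P T' (fun j => szB j + (d:ℤ)) :=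
    hh_mono hCo hCoCp hpa0 hpa1 hG (Mon_zps _) (Mon_addc (Mon_zps _) d) h1
  have h3 : hh P T' (fun j => szB j + (d:ℤ)) ≤ hh P T' szB + cc P * d :=
    hh_lip hCo hCoCp hpa0 hpa1 hG szB d (Mon_zps _)
  have h4 : (a0:ℝ) + (d:ℝ) = (b0:ℝ) := by
    have : a0 + d = b0 := by omega
    exact_mod_cast congrArg (Nat.cast : ℕ → ℝ) this
  have h5 : 0 ≤ cc P := cc_nonneg hCo hCoCp hpa0 hpa1 hG
  nlinarith [h2, h3, h4, h5]

/-- the nonnegative representative. -/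
def nnv (A : Fin N → ℤ) : Fin N → ℤ := fun i => ((A i).toNat : ℤ)

omit hCo hCoCp hpa0 hpa1 hG in
lemma Mon_nnv {A : Fin N → ℤ} (hA : Mon A) : Mon (nnv A) := by
  intro i j hij
  have := hA i j hij
  show ((A i).toNat : ℤ) ≤ ((A j).toNat : ℤ)
  omega

omit hCo hCoCp hpa0 hpa1 hG in
lemma zst_nnv (A : Fin N → ℤ) : zst (nnv A) = zst A := by
  funext i
  by_cases h0 : (i:ℕ) = 0
  · rw [zst_apply0 _ _ h0, zst_apply0 _ _ h0]
    show ((((A i).toNat :ℤ)).toNat) = (A i).toNat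
    omega
  · have hipN : (i:ℕ)-1 < N := by have := i.isLt; omega
    rw [zst_applyS _ i ⟨(i:ℕ)-1, hipN⟩ (show (i:ℕ)-1+1 = (i:ℕ) by omega),
      zst_applyS _ i ⟨(i:ℕ)-1, hipN⟩ (show (i:ℕ)-1+1 = (i:ℕ) by omega)]
    show (((A i).toNat:ℤ)).toNat - (((A ⟨(i:ℕ)-1, hipN⟩).toNat:ℤ)).toNat = _
    omega

lemma JJ_lip (hN : 0 < N) {B : Fin N → ℤ} (hB : Mon B) (t : ℕ) :
    JofG P (GA P T') (zst (fun i => B i + (t:ℤ)))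
      ≤ JofG P (GA P T') (zst B) + cc P * t := by
  have step1 : JofG P (GA P T') (zst (fun i => B i + (t:ℤ)))
      ≤ JofG P (GA P T') (zst (fun i => nnv B i + (t:ℤ))) := by
    apply JJ_mono hCo hCoCp hpa0 hpa1 hG hN (Mon_addc hB t) (Mon_addc (Mon_nnv hB) t)
    intro i
    show B i + (t:ℤ) ≤ ((B i).toNat : ℤ) + t
    omega
  refine step1.trans ?_
  rw [JJrep hCo hCoCp hpa0 hpa1 hG hN (Mon_addc (Mon_nnv hB) t)]
  have eJ : JofG P (GA P T') (zst B) = JofG P (GA P T') (zst (nnv B)) := by rw [zst_nnv]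
  rw [eJ, JJrep hCo hCoCp hpa0 hpa1 hG hN (Mon_nnv hB)]
  have e1 : zps (shift (zst (fun i => nnv B i + (t:ℤ)))) = zps (shift (zst (nnv B))) := by
    funext j
    rw [szv_eval _ (Mon_addc (Mon_nnv hB) t) j (jmF hN j) ⟨0,hN⟩ rfl rfl,
      szv_eval _ (Mon_nnv hB) j (jmF hN j) ⟨0,hN⟩ rfl rfl]
    show ((((B (jmF hN j)).toNat:ℤ) + (t:ℤ)).toNat : ℤ) - ((((B ⟨0,hN⟩).toNat:ℤ) + (t:ℤ)).toNat : ℤ)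
        = (((((B (jmF hN j)).toNat:ℤ)).toNat :ℤ)) - (((((B ⟨0,hN⟩).toNat:ℤ)).toNat :ℤ))
    omega
  rw [e1]
  have e2 : (((fun i => nnv B i + (t:ℤ)) ⟨0,hN⟩).toNat : ℕ) = ((nnv B ⟨0,hN⟩).toNat) + t := by
    show ((((B ⟨0,hN⟩).toNat:ℤ) + (t:ℤ)).toNat : ℕ) = (((B ⟨0,hN⟩).toNat:ℤ)).toNat + t
    omega
  rw [e2]
  have h5 : 0 ≤ cc P := cc_nonneg hCo hCoCp hpa0 hpa1 hG
  push_cast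
  nlinarith [h5]

omit hCo hCoCp hpa0 hpa1 hG in
lemma sc_mu (a b : ℤ) : (muu (a+b)).toNat ≤ muu ((a.toNat:ℤ) + (b.toNat:ℤ)) := by
  unfold muu
  omega

omit hCo hCoCp hpa0 hpa1 hG in
lemma sc_md (a b : ℤ) : (mdd (a+b)).toNat ≤ mdd ((a.toNat:ℤ) + (b.toNat:ℤ)) := by
  unfold mdd
  omega

lemma JJ_mid (hN : 0 < N) {A B : Fin N → ℤ} (hA : Mon A) (hB : Mon B) :
    JofG P (GA P T') (zst (muv A B)) + JofG P (GA P T') (zst (mdv A B))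
      ≤ JofG P (GA P T') (zst A) + JofG P (GA P T') (zst B) := by
  have hMu := Mon_muv hA hB
  have hMd := Mon_mdv hA hB
  rw [JJrep hCo hCoCp hpa0 hpa1 hG hN hMu, JJrep hCo hCoCp hpa0 hpa1 hG hN hMd,
    JJrep hCo hCoCp hpa0 hpa1 hG hN hA, JJrep hCo hCoCp hpa0 hpa1 hG hN hB]
  have hcc : 0 ≤ cc P := cc_nonneg hCo hCoCp hpa0 hpa1 hG
  -- scalars
  set a0 : ℕ := (A ⟨0,hN⟩).toNat with ha0
  set b0 : ℕ := (B ⟨0,hN⟩).toNat with hb0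
  have hu0 : (muv A B ⟨0,hN⟩).toNat = (muu (A ⟨0,hN⟩ + B ⟨0,hN⟩)).toNat := rfl
  have hv0 : (mdv A B ⟨0,hN⟩).toNat = (mdd (A ⟨0,hN⟩ + B ⟨0,hN⟩)).toNat := rfl
  set u0 : ℕ := (muu (A ⟨0,hN⟩ + B ⟨0,hN⟩)).toNat with hu0'
  set v0 : ℕ := (mdd (A ⟨0,hN⟩ + B ⟨0,hN⟩)).toNat with hv0'
  have hu0le : (u0:ℤ) ≤ muu ((a0:ℤ) + (b0:ℤ)) := sc_mu _ _
  have hv0le : (v0:ℤ) ≤ mdd ((a0:ℤ) + (b0:ℤ)) := sc_md _ _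
  set D1 : ℕ := (muu ((a0:ℤ) + (b0:ℤ)) - (u0:ℤ)).toNat with hD1
  set D2 : ℕ := (mdd ((a0:ℤ) + (b0:ℤ)) - (v0:ℤ)).toNat with hD2
  have hD1' : (D1:ℤ) = muu ((a0:ℤ) + (b0:ℤ)) - (u0:ℤ) := by omega
  have hD2' : (D2:ℤ) = mdd ((a0:ℤ) + (b0:ℤ)) - (v0:ℤ) := by omega
  have hsum0 : u0 + D1 + (v0 + D2) = a0 + b0 := by
    have := sc_mu (A ⟨0,hN⟩) (B ⟨0,hN⟩)
    have h3 : muu ((a0:ℤ)+(b0:ℤ)) + mdd ((a0:ℤ)+(b0:ℤ)) = (a0:ℤ)+(b0:ℤ) := by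
      unfold muu mdd
      ring
    omega
  -- vectors
  set szA := zps (shift (zst A)) with hszA
  set szB := zps (shift (zst B)) with hszB
  set szU := zps (shift (zst (muv A B))) with hszU
  set szV := zps (shift (zst (mdv A B))) with hszV
  set Wu : Fin N → ℤ := fun j => muu (szA j + szB j + ((a0:ℤ)+(b0:ℤ))) - muu ((a0:ℤ)+(b0:ℤ))
    with hWu
  set Wd : Fin N → ℤ := fun j => mdd (szA j + szB j + ((a0:ℤ)+(b0:ℤ))) - mdd ((a0:ℤ)+(b0:ℤ))
    with hWd
  have hMonWu : Mon Wu := by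
    intro i j hij
    have h1 := Mon_zps (shift (zst A)) i j hij
    have h2 := Mon_zps (shift (zst B)) i j hij
    rw [← hszA] at h1
    rw [← hszB] at h2
    show muu (szA i + szB i + ((a0:ℤ)+(b0:ℤ))) - muu ((a0:ℤ)+(b0:ℤ))
      ≤ muu (szA j + szB j + ((a0:ℤ)+(b0:ℤ))) - muu ((a0:ℤ)+(b0:ℤ))
    simp only [muu]
    omega
  have hMonWd : Mon Wd := by
    intro i j hij
    have h1 := Mon_zps (shift (zst A)) i j hij
    have h2 := Mon_zps (shift (zst B)) i j hij
    rw [← hszA] at h1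
    rw [← hszB] at h2
    show mdd (szA i + szB i + ((a0:ℤ)+(b0:ℤ))) - mdd ((a0:ℤ)+(b0:ℤ))
      ≤ mdd (szA j + szB j + ((a0:ℤ)+(b0:ℤ))) - mdd ((a0:ℤ)+(b0:ℤ))
    simp only [mdd]
    omega
  -- component evaluation facts
  have hevA : ∀ j, szA j = ((A (jmF hN j)).toNat : ℤ) - ((a0:ℕ) : ℤ) := by
    intro j
    rw [hszA, szv_eval A hA j (jmF hN j) ⟨0,hN⟩ rfl rfl, ha0]
  have hevB : ∀ j, szB j = ((B (jmF hN j)).toNat : ℤ) - ((b0:ℕ) : ℤ) := by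
    intro j
    rw [hszB, szv_eval B hB j (jmF hN j) ⟨0,hN⟩ rfl rfl, hb0]
  have hevU : ∀ j, szU j = ((muu (A (jmF hN j) + B (jmF hN j))).toNat : ℤ) - ((u0:ℕ):ℤ) := by
    intro j
    rw [hszU, szv_eval (muv A B) hMu j (jmF hN j) ⟨0,hN⟩ rfl rfl]
    rfl
  have hevV : ∀ j, szV j = ((mdd (A (jmF hN j) + B (jmF hN j))).toNat : ℤ) - ((v0:ℕ):ℤ) := by
    intro j
    rw [hszV, szv_eval (mdv A B) hMd j (jmF hN j) ⟨0,hN⟩ rfl rfl]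
    rfl
  -- the two dominating inequalities
  have hc1 : ∀ j, szU j ≤ Wu j + (D1:ℤ) := by
    intro j
    rw [hevU j]
    have hWuj : Wu j = muu (szA j + szB j + ((a0:ℤ)+(b0:ℤ))) - muu ((a0:ℤ)+(b0:ℤ)) := rfl
    rw [hWuj, hevA j, hevB j]
    have hsc := sc_mu (A (jmF hN j)) (B (jmF hN j))
    have hd := hD1'
    simp only [muu] at hsc hd ⊢
    omega
  have hc2 : ∀ j, szV j ≤ Wd j + (D2:ℤ) := by
    intro j
    rw [hevV j]
    have hWdj : Wd j = mdd (szA j + szB j + ((a0:ℤ)+(b0:ℤ))) - mdd ((a0:ℤ)+(b0:ℤ)) := rfl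
    rw [hWdj, hevA j, hevB j]
    have hsc := sc_md (A (jmF hN j)) (B (jmF hN j))
    have hd := hD2'
    simp only [mdd] at hsc hd ⊢
    omega
  -- chain of hh inequalities
  have hhu1 : hh P T' szU ≤ hh P T' (fun j => Wu j + ((D1:ℕ):ℤ)) :=
    hh_mono hCo hCoCp hpa0 hpa1 hG (Mon_zps _) (Mon_addc hMonWu D1) hc1
  have hhu2 : hh P T' (fun j => Wu j + ((D1:ℕ):ℤ)) ≤ hh P T' Wu + cc P * D1 :=
    hh_lip hCo hCoCp hpa0 hpa1 hG Wu D1 hMonWu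
  have hhv1 : hh P T' szV ≤ hh P T' (fun j => Wd j + ((D2:ℕ):ℤ)) :=
    hh_mono hCo hCoCp hpa0 hpa1 hG (Mon_zps _) (Mon_addc hMonWd D2) hc2
  have hhv2 : hh P T' (fun j => Wd j + ((D2:ℕ):ℤ)) ≤ hh P T' Wd + cc P * D2 :=
    hh_lip hCo hCoCp hpa0 hpa1 hG Wd D2 hMonWd
  -- parity: {Wu, Wd} = {muv szA szB, mdv szA szB}
  have hpar : hh P T' Wu + hh P T' Wd = hh P T' (muv szA szB) + hh P T' (mdv szA szB) := by
    rcases Nat.even_or_odd (a0 + b0) with hpa | hpa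
    · have hp2 : (a0 + b0) % 2 = 0 := Nat.even_iff.mp hpa
      have e1 : Wu = muv szA szB := by
        funext j
        rw [hWu]
        show muu (szA j + szB j + ((a0:ℤ)+(b0:ℤ))) - muu ((a0:ℤ)+(b0:ℤ)) = muu (szA j + szB j)
        simp only [muu]
        omega
      have e2 : Wd = mdv szA szB := by
        funext j
        rw [hWd]
        show mdd (szA j + szB j + ((a0:ℤ)+(b0:ℤ))) - mdd ((a0:ℤ)+(b0:ℤ)) = mdd (szA j + szB j)
        simp only [mdd]
        omega
      rw [e1, e2]
    · have hp2 : (a0 + b0) % 2 = 1 := Nat.odd_iff.mp hpa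
      have e1 : Wu = mdv szA szB := by
        funext j
        rw [hWu]
        show muu (szA j + szB j + ((a0:ℤ)+(b0:ℤ))) - muu ((a0:ℤ)+(b0:ℤ)) = mdd (szA j + szB j)
        simp only [muu, mdd]
        omega
      have e2 : Wd = muv szA szB := by
        funext j
        rw [hWd]
        show mdd (szA j + szB j + ((a0:ℤ)+(b0:ℤ))) - mdd ((a0:ℤ)+(b0:ℤ)) = muu (szA j + szB j)
        simp only [muu, mdd]
        omega
      rw [e1, e2]
      ring
  have hmid : hh P T' (muv szA szB) + hh P T' (mdv szA szB) ≤ hh P T' szA + hh P T' szB :=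
    hh_mid hCo hCoCp hpa0 hpa1 hG szA szB (Mon_zps _) (Mon_zps _)
  -- final arithmetic
  rw [hu0, hv0]
  have hcast : (u0:ℝ) + (D1:ℝ) + ((v0:ℝ) + (D2:ℝ)) = (a0:ℝ) + (b0:ℝ) := by
    exact_mod_cast congrArg (Nat.cast : ℕ → ℝ) hsum0
  nlinarith [hhu1, hhu2, hhv1, hhv2, hpar, hmid, hcast, hcc,
    mul_le_mul_of_nonneg_left (le_refl (cc P)) hcc]

end Jlayer

/-! ### the main induction: `Phi` has all the good properties -/

lemma Mon_zdelta (k : ℕ) : Mon (zdelta (N := N) k) := by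
  intro i j hij
  have hval := Fin.le_def.mp hij
  simp only [zdelta]
  split_ifs <;> omega

lemma zdelta_cases (k : ℕ) (i : Fin N) : zdelta k i = 0 ∨ zdelta k i = 1 := by
  simp only [zdelta]
  split_ifs <;> simp

lemma Mon_X {A : Fin N → ℤ} (hA : Mon A) (k : ℕ) :
    Mon (fun i => nnv A i + zdelta k i) := by
  intro i j hij
  have h1 := Mon_nnv hA i j hij
  have h2 := Mon_zdelta k i j hij
  show nnv A i + zdelta k i ≤ nnv A j + zdelta k j
  omega

lemma Mon_Xm {A : Fin N → ℤ} (hA : Mon A) (k : ℕ) :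
    Mon (fun i => (nnv A i + zdelta k i) - ((1:ℕ):ℤ)) := by
  intro i j hij
  have h1 := Mon_X hA k i j hij
  simp only at h1
  show (nnv A i + zdelta k i) - ((1:ℕ):ℤ) ≤ (nnv A j + zdelta k j) - ((1:ℕ):ℤ)
  omega

lemma Phi_succ_rep (P : Params) {T : ℕ} {A : Fin N → ℤ} (hA : Mon A) :
    Phi P (T+1) A = ∑ k ∈ Finset.range (N+1), P.p k *
      (P.mu * JofG P (GA P T) (zst (fun i => (nnv A i + zdelta k i) - ((1:ℕ):ℤ))) +
        (1 - P.mu) * JofG P (GA P T) (zst (fun i => nnv A i + zdelta k i))) := by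
  show (∑ k ∈ Finset.range (N+1), P.p k *
      (P.mu * JofG P (GA P T) (proc (zst A + avec k)) +
        (1 - P.mu) * JofG P (GA P T) (zst A + avec k))) = _
  apply Finset.sum_congr rfl
  intro k _
  have e1 : zst (fun i => nnv A i + zdelta k i) = zst A + avec k := by
    rw [zst_add_delta (nnv A) (Mon_nnv hA) (fun i => by show (0:ℤ) ≤ ((A i).toNat:ℤ); omega) k]
    funext i
    show zst (nnv A) i + avec k i = zst A i + avec k i
    rw [zst_nnv]
  have e2 : zst (fun i => (nnv A i + zdelta k i) - ((1:ℕ):ℤ)) = proc (zst A + avec k) := by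
    rw [proc_eq_offload, ← e1, ← zst_sub (fun i => nnv A i + zdelta k i) (Mon_X hA k) 1]
  rw [e1, e2]

theorem GoodPhi (hN : 0 < N) (P : Params) (hCo : 0 < P.Co) (hCoCp : P.Co ≤ P.Cp)
    (hpa0 : 0 ≤ P.pa) (hpa1 : P.pa ≤ 1) (hmu0 : 0 ≤ P.mu) (hmu1 : P.mu ≤ 1)
    (hp : ∀ k ≤ N, 0 ≤ P.p k)
    (hpsum : ∑ k ∈ Finset.range (N+1), P.p k = 1) :
    ∀ T, GoodF P (Phi (N := N) P T) := by
  intro T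
  induction T with
  | zero =>
    refine ⟨fun h => rfl, fun _ _ _ => le_refl _, fun A t hA => ?_, fun A B hA hB => ?_⟩
    · show (0:ℝ) ≤ 0 + P.Cp * t
      have h1 : (0:ℝ) ≤ P.Cp * t := mul_nonneg (by linarith) (Nat.cast_nonneg t)
      linarith
    · show (0:ℝ) + 0 ≤ 0 + 0
      norm_num
  | succ T ih =>
    have hpk : ∀ k ∈ Finset.range (N+1), 0 ≤ P.p k := by
      intro k hk
      exact hp k (by simp only [Finset.mem_range] at hk; omega)
    have hmu1' : 0 ≤ 1 - P.mu := by linarith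
    refine ⟨fun h => Phi_congr P h, ?_, ?_, ?_⟩
    · -- monotonicity
      intro A B hA hB hAB
      rw [Phi_succ_rep P hA, Phi_succ_rep P hB]
      apply Finset.sum_le_sum
      intro k hk
      apply mul_le_mul_of_nonneg_left _ (hpk k hk)
      have m1 : JofG P (GA P T) (zst (fun i => (nnv A i + zdelta k i) - ((1:ℕ):ℤ)))
          ≤ JofG P (GA P T) (zst (fun i => (nnv B i + zdelta k i) - ((1:ℕ):ℤ))) := by
        apply JJ_mono hCo hCoCp hpa0 hpa1 ih hN (Mon_Xm hA k) (Mon_Xm hB k)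
        intro i
        have := hAB i
        show (nnv A i + zdelta k i) - ((1:ℕ):ℤ) ≤ (nnv B i + zdelta k i) - ((1:ℕ):ℤ)
        simp only [nnv]
        omega
      have m2 : JofG P (GA P T) (zst (fun i => nnv A i + zdelta k i))
          ≤ JofG P (GA P T) (zst (fun i => nnv B i + zdelta k i)) := by
        apply JJ_mono hCo hCoCp hpa0 hpa1 ih hN (Mon_X hA k) (Mon_X hB k)
        intro i
        have := hAB i
        show nnv A i + zdelta k i ≤ nnv B i + zdelta k i
        simp only [nnv]
        omega
      have w1 := mul_le_mul_of_nonneg_left m1 hmu0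
      have w2 := mul_le_mul_of_nonneg_left m2 hmu1'
      linarith
    · -- Lipschitz
      intro A t hA
      rw [Phi_succ_rep P (Mon_addc hA t), Phi_succ_rep P hA]
      have key : ∀ k ∈ Finset.range (N+1),
          P.p k * (P.mu * JofG P (GA P T)
              (zst (fun i => (nnv (fun i' => A i' + (t:ℤ)) i + zdelta k i) - ((1:ℕ):ℤ))) +
            (1 - P.mu) * JofG P (GA P T)
              (zst (fun i => nnv (fun i' => A i' + (t:ℤ)) i + zdelta k i)))
          ≤ P.p k * (P.mu * JofG P (GA P T)
              (zst (fun i => (nnv A i + zdelta k i) - ((1:ℕ):ℤ))) +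
            (1 - P.mu) * JofG P (GA P T) (zst (fun i => nnv A i + zdelta k i)))
            + P.p k * (cc P * t) := by
        intro k hk
        have m1 : JofG P (GA P T)
            (zst (fun i => (nnv (fun i' => A i' + (t:ℤ)) i + zdelta k i) - ((1:ℕ):ℤ)))
            ≤ JofG P (GA P T)
              (zst (fun i => ((nnv A i + zdelta k i) - ((1:ℕ):ℤ)) + (t:ℤ))) := by
          apply JJ_mono hCo hCoCp hpa0 hpa1 ih hN (Mon_Xm (Mon_addc hA t) k)
            (Mon_addc (Mon_Xm hA k) t)
          intro i
          show (((A i + (t:ℤ)).toNat : ℤ) + zdelta k i) - ((1:ℕ):ℤ)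
              ≤ (((A i).toNat : ℤ) + zdelta k i) - ((1:ℕ):ℤ) + (t:ℤ)
          omega
        have l1 : JofG P (GA P T)
            (zst (fun i => ((nnv A i + zdelta k i) - ((1:ℕ):ℤ)) + (t:ℤ)))
            ≤ JofG P (GA P T) (zst (fun i => (nnv A i + zdelta k i) - ((1:ℕ):ℤ)))
              + cc P * t :=
          JJ_lip hCo hCoCp hpa0 hpa1 ih hN (Mon_Xm hA k) t
        have m2 : JofG P (GA P T) (zst (fun i => nnv (fun i' => A i' + (t:ℤ)) i + zdelta k i))
            ≤ JofG P (GA P T) (zst (fun i => (nnv A i + zdelta k i) + (t:ℤ))) := by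
          apply JJ_mono hCo hCoCp hpa0 hpa1 ih hN (Mon_X (Mon_addc hA t) k)
            (Mon_addc (Mon_X hA k) t)
          intro i
          show (((A i + (t:ℤ)).toNat : ℤ) + zdelta k i)
              ≤ (((A i).toNat : ℤ) + zdelta k i) + (t:ℤ)
          omega
        have l2 : JofG P (GA P T) (zst (fun i => (nnv A i + zdelta k i) + (t:ℤ)))
            ≤ JofG P (GA P T) (zst (fun i => nnv A i + zdelta k i)) + cc P * t :=
          JJ_lip hCo hCoCp hpa0 hpa1 ih hN (Mon_X hA k) t
        have w1 := mul_le_mul_of_nonneg_left (le_trans m1 l1) hmu0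
        have w2 := mul_le_mul_of_nonneg_left (le_trans m2 l2) hmu1'
        have := hpk k hk
        nlinarith [w1, w2]
      have hsum := Finset.sum_le_sum key
      refine hsum.trans ?_
      rw [Finset.sum_add_distrib, ← Finset.sum_mul, hpsum, one_mul]
      have hcc : cc P ≤ P.Cp := by unfold cc; nlinarith
      have ht0 : (0:ℝ) ≤ t := by positivity
      have hcct : cc P * t ≤ P.Cp * t := mul_le_mul_of_nonneg_right hcc ht0
      linarith
    · -- midpoint convexity
      intro A B hA hB
      rw [Phi_succ_rep P (Mon_muv hA hB), Phi_succ_rep P (Mon_mdv hA hB),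
        Phi_succ_rep P hA, Phi_succ_rep P hB]
      rw [← Finset.sum_add_distrib, ← Finset.sum_add_distrib]
      apply Finset.sum_le_sum
      intro k hk
      have hd : ∀ i : Fin N, zdelta k i = 0 ∨ zdelta k i = 1 := zdelta_cases k
      -- abbreviate the four base vectors
      have K1 : JofG P (GA P T) (zst (fun i => nnv (muv A B) i + zdelta k i))
            + JofG P (GA P T) (zst (fun i => nnv (mdv A B) i + zdelta k i))
          ≤ JofG P (GA P T) (zst (fun i => nnv A i + zdelta k i))
            + JofG P (GA P T) (zst (fun i => nnv B i + zdelta k i)) := by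
        have s1 : JofG P (GA P T) (zst (fun i => nnv (muv A B) i + zdelta k i))
            ≤ JofG P (GA P T) (zst (muv (fun i => nnv A i + zdelta k i)
                (fun i => nnv B i + zdelta k i))) := by
          apply JJ_mono hCo hCoCp hpa0 hpa1 ih hN (Mon_X (Mon_muv hA hB) k)
            (Mon_muv (Mon_X hA k) (Mon_X hB k))
          intro i
          show ((muu (A i + B i)).toNat : ℤ) + zdelta k i
              ≤ muu ((((A i).toNat:ℤ) + zdelta k i) + (((B i).toNat:ℤ) + zdelta k i))
          rcases hd i with h | h <;> simp only [muu, h] <;> omega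
        have s2 : JofG P (GA P T) (zst (fun i => nnv (mdv A B) i + zdelta k i))
            ≤ JofG P (GA P T) (zst (mdv (fun i => nnv A i + zdelta k i)
                (fun i => nnv B i + zdelta k i))) := by
          apply JJ_mono hCo hCoCp hpa0 hpa1 ih hN (Mon_X (Mon_mdv hA hB) k)
            (Mon_mdv (Mon_X hA k) (Mon_X hB k))
          intro i
          show ((mdd (A i + B i)).toNat : ℤ) + zdelta k i
              ≤ mdd ((((A i).toNat:ℤ) + zdelta k i) + (((B i).toNat:ℤ) + zdelta k i))
          rcases hd i with h | h <;> simp only [mdd, h] <;> omega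
        have s3 := JJ_mid hCo hCoCp hpa0 hpa1 ih hN (Mon_X hA k) (Mon_X hB k)
        linarith
      have K2 : JofG P (GA P T) (zst (fun i => (nnv (muv A B) i + zdelta k i) - ((1:ℕ):ℤ)))
            + JofG P (GA P T) (zst (fun i => (nnv (mdv A B) i + zdelta k i) - ((1:ℕ):ℤ)))
          ≤ JofG P (GA P T) (zst (fun i => (nnv A i + zdelta k i) - ((1:ℕ):ℤ)))
            + JofG P (GA P T) (zst (fun i => (nnv B i + zdelta k i) - ((1:ℕ):ℤ))) := by
        have s1 : JofG P (GA P T) (zst (fun i => (nnv (muv A B) i + zdelta k i) - ((1:ℕ):ℤ)))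
            ≤ JofG P (GA P T) (zst (muv (fun i => (nnv A i + zdelta k i) - ((1:ℕ):ℤ))
                (fun i => (nnv B i + zdelta k i) - ((1:ℕ):ℤ)))) := by
          apply JJ_mono hCo hCoCp hpa0 hpa1 ih hN (Mon_Xm (Mon_muv hA hB) k)
            (Mon_muv (Mon_Xm hA k) (Mon_Xm hB k))
          intro i
          show (((muu (A i + B i)).toNat : ℤ) + zdelta k i) - ((1:ℕ):ℤ)
              ≤ muu (((((A i).toNat:ℤ) + zdelta k i) - ((1:ℕ):ℤ))
                  + ((((B i).toNat:ℤ) + zdelta k i) - ((1:ℕ):ℤ)))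
          rcases hd i with h | h <;> simp only [muu, h] <;> omega
        have s2 : JofG P (GA P T) (zst (fun i => (nnv (mdv A B) i + zdelta k i) - ((1:ℕ):ℤ)))
            ≤ JofG P (GA P T) (zst (mdv (fun i => (nnv A i + zdelta k i) - ((1:ℕ):ℤ))
                (fun i => (nnv B i + zdelta k i) - ((1:ℕ):ℤ)))) := by
          apply JJ_mono hCo hCoCp hpa0 hpa1 ih hN (Mon_Xm (Mon_mdv hA hB) k)
            (Mon_mdv (Mon_Xm hA k) (Mon_Xm hB k))
          intro i
          show (((mdd (A i + B i)).toNat : ℤ) + zdelta k i) - ((1:ℕ):ℤ)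
              ≤ mdd (((((A i).toNat:ℤ) + zdelta k i) - ((1:ℕ):ℤ))
                  + ((((B i).toNat:ℤ) + zdelta k i) - ((1:ℕ):ℤ)))
          rcases hd i with h | h <;> simp only [mdd, h] <;> omega
        have s3 := JJ_mid hCo hCoCp hpa0 hpa1 ih hN (Mon_Xm hA k) (Mon_Xm hB k)
        linarith
      have w1 := mul_le_mul_of_nonneg_left K2 hmu0
      have w2 := mul_le_mul_of_nonneg_left K1 hmu1'
      have := hpk k hk
      nlinarith [w1, w2]
end Aux

/-- discrete convexity of F(s,·) on {n_1, …, |s|}. -/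
theorem F_discrete_convex {N : ℕ} (hN : 1 ≤ N)
    (P : Params) (hCo : 0 < P.Co) (hCoCp : P.Co < P.Cp)
    (hpa0 : 0 ≤ P.pa) (hpa1 : P.pa ≤ 1) (hmu0 : 0 ≤ P.mu) (hmu1 : P.mu ≤ 1)
    (hp : ∀ k ≤ N, 0 ≤ P.p k) (hpsum : ∑ k ∈ Finset.range (N + 1), P.p k = 1)
    (T : ℕ) (hT : 1 ≤ T) (s : Fin N → ℕ) (L : ℕ)
    (hL1 : S s 1 ≤ L) (hL2 : L + 2 ≤ tot s) :
    F P T s L + F P T s (L + 2) ≥ 2 * F P T s (L + 1) := by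
  have hG := Aux.GoodPhi hN P hCo hCoCp.le hpa0 hpa1 hmu0 hmu1 hp hpsum (T-1)
  have hFrep : ∀ L' : ℕ, F P T s L' = P.Cp * ((S s 1 - L' : ℕ) : ℝ)
      + Aux.Phi P (T-1) (Aux.zps (shift (offload s L'))) + (L' : ℝ) * P.Co := by
    intro L'
    show JNA P T (offload s L') + (L' : ℝ) * P.Co = _
    unfold JNA costNA
    rw [Aux.S_offload]
    rw [Aux.GA_eq_Phi P (T-1) (offload s L') 0, Aux.offload_zero]
  rw [hFrep L, hFrep (L+1), hFrep (L+2)]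
  set W : ℕ → (Fin N → ℤ) := fun L' => Aux.zps (shift (offload s L')) with hW
  have hCp0 : (0:ℝ) ≤ P.Cp := by linarith
  have p1 : 2 * ((S s 1 - (L+1) : ℕ):ℝ) ≤ ((S s 1 - L : ℕ):ℝ) + ((S s 1 - (L+2) : ℕ):ℝ) := by
    have h : 2 * (S s 1 - (L+1)) ≤ (S s 1 - L) + (S s 1 - (L+2)) := by omega
    exact_mod_cast h
  have hev : ∀ (L' : ℕ) (j : Fin N), W L' j =
      (((S s (min ((j:ℕ)+1+1) N) - L') - (S s 1 - L') : ℕ) : ℤ) := by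
    intro L' j
    show Aux.zps (shift (offload s L')) j = _
    rw [Aux.zps_apply, Aux.S_shift, Aux.S_offload, Aux.S_offload]
  have p2 : 2 * Aux.Phi P (T-1) (W (L+1)) ≤ Aux.Phi P (T-1) (W L) + Aux.Phi P (T-1) (W (L+2)) := by
    have hmd : Aux.mdv (W L) (W (L+2)) = W (L+1) := by
      funext j
      have h1 := hev L j
      have h2 := hev (L+2) j
      have h3 := hev (L+1) j
      have hy : S s 1 ≤ S s (min ((j:ℕ)+1+1) N) := Aux.S_le s (by have := j.isLt; omega)
      show Aux.mdd (W L j + W (L+2) j) = W (L+1) j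
      rw [h1, h2, h3]
      simp only [Aux.mdd]
      omega
    have hle : ∀ j, W (L+1) j ≤ Aux.muv (W L) (W (L+2)) j := by
      intro j
      have h1 := hev L j
      have h2 := hev (L+2) j
      have h3 := hev (L+1) j
      have hy : S s 1 ≤ S s (min ((j:ℕ)+1+1) N) := Aux.S_le s (by have := j.isLt; omega)
      show W (L+1) j ≤ Aux.muu (W L j + W (L+2) j)
      rw [h1, h2, h3]
      simp only [Aux.muu]
      omega
    have hmono := hG.mono (Aux.Mon_zps _) (Aux.Mon_muv (Aux.Mon_zps _) (Aux.Mon_zps _)) hle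
    have hmid := hG.mid (W L) (W (L+2)) (Aux.Mon_zps _) (Aux.Mon_zps _)
    rw [hmd] at hmid
    linarith
  have q1 := mul_le_mul_of_nonneg_left p1 hCp0
  have q3 : (L:ℝ)*P.Co + ((L+2:ℕ):ℝ)*P.Co = 2*(((L+1:ℕ)):ℝ)*P.Co := by
    push_cast
    ring
  push_cast at q1 q3 ⊢
  linarith [q1, p2, q3]
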